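/- Let ψ : Fin dA × Fin dB → ℂ, and suppose the number of pairs (i,j) with ψ(i,j) ≠ 0 is a prime number p with p > max(dA, dB). Then for every permutation π of Fin dA × Fin dB, the real matrix M with M(i,j) = |ψ(π(i,j))| does not have rank 1; consequently there is no incoherent unitary mapping ψ to a product vector, i.e., ψ has nonzero genuine distributed coherence. -/

import Mathlib

private lemma my_ncard_prod {α β : Type*} [Finite α] [Finite β] (s : Set α) (t : Set β) :
    (s ×ˢ t).ncard = s.ncard * t.ncard := by
  rw [← Nat.card_coe_set_eq, ← Nat.card_coe_set_eq, ← Nat.card_coe_set_eq,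
    Nat.card_congr (Equiv.Set.prod s t), Nat.card_prod]

private lemma support_count {dA dB : ℕ} (ψ : Fin dA × Fin dB → ℂ)
    (π : Equiv.Perm (Fin dA × Fin dB)) {K : Type*} [MulZeroClass K] [NoZeroDivisors K]
    (u : Fin dA → K) (w : Fin dB → K)
    (h : ∀ q : Fin dA × Fin dB, ψ (π q) ≠ 0 ↔ u q.1 * w q.2 ≠ 0) :
    {q : Fin dA × Fin dB | ψ q ≠ 0}.ncard
      = {i : Fin dA | u i ≠ 0}.ncard * {j : Fin dB | w j ≠ 0}.ncard := by
  have h1 : {q : Fin dA × Fin dB | ψ q ≠ 0}.ncard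
      = (π.symm '' {q : Fin dA × Fin dB | ψ q ≠ 0}).ncard :=
    (Set.ncard_image_of_injective _ π.symm.injective).symm
  have h2 : π.symm '' {q : Fin dA × Fin dB | ψ q ≠ 0}
      = {i : Fin dA | u i ≠ 0} ×ˢ {j : Fin dB | w j ≠ 0} := by
    rw [Equiv.image_eq_preimage_symm]
    ext q
    simp only [Set.mem_preimage, Equiv.symm_symm, Set.mem_setOf_eq, Set.mem_prod]
    rw [h q, mul_ne_zero_iff]
  rw [h1, h2, my_ncard_prod]

private lemma no_such_factorization {dA dB : ℕ} (ψ : Fin dA × Fin dB → ℂ) (p : ℕ)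
    (hcard : {q : Fin dA × Fin dB | ψ q ≠ 0}.ncard = p)
    (hp : p.Prime) (hgt : max dA dB < p)
    (π : Equiv.Perm (Fin dA × Fin dB)) {K : Type*} [MulZeroClass K] [NoZeroDivisors K]
    (u : Fin dA → K) (w : Fin dB → K)
    (h : ∀ q : Fin dA × Fin dB, ψ (π q) ≠ 0 ↔ u q.1 * w q.2 ≠ 0) : False := by
  have key := support_count ψ π u w h
  rw [hcard] at key
  set x := {i : Fin dA | u i ≠ 0}.ncard with hx
  set y := {j : Fin dB | w j ≠ 0}.ncard with hy
  have hxA : x < p := by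
    calc x ≤ (Set.univ : Set (Fin dA)).ncard :=
          Set.ncard_le_ncard (Set.subset_univ _) Set.finite_univ
      _ = dA := by rw [Set.ncard_univ]; simp
      _ ≤ max dA dB := le_max_left _ _
      _ < p := hgt
  have hyB : y < p := by
    calc y ≤ (Set.univ : Set (Fin dB)).ncard :=
          Set.ncard_le_ncard (Set.subset_univ _) Set.finite_univ
      _ = dB := by rw [Set.ncard_univ]; simp
      _ ≤ max dA dB := le_max_right _ _
      _ < p := hgt
  have hdvd : x ∣ p := ⟨y, key⟩
  rcases (Nat.Prime.eq_one_or_self_of_dvd hp x hdvd) with h1 | h1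
  · rw [h1, one_mul] at key
    omega
  · omega

/-- If the number of nonzero coefficients of `ψ : Fin dA × Fin dB → ℂ`
is a prime `p` strictly larger than `max dA dB`, then for every permutation `π` the
matrix of moduli `(i,j) ↦ |ψ (π (i,j))|` does not have rank one; consequently no
incoherent unitary (permutation plus phases) maps `ψ` to a product vector, i.e. `ψ`
has nonzero genuine distributed coherence. -/
theorem prime_support_implies_no_rank_one_rearrangement
    {dA dB : ℕ} (ψ : Fin dA × Fin dB → ℂ) (p : ℕ)
    (hcard : {q : Fin dA × Fin dB | ψ q ≠ 0}.ncard = p)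
    (hp : p.Prime) (hgt : max dA dB < p) :
    (∀ π : Equiv.Perm (Fin dA × Fin dB),
        (Matrix.of fun i j => ‖ψ (π (i, j))‖).rank ≠ 1) ∧
      ¬ ∃ (π : Equiv.Perm (Fin dA × Fin dB)) (φ : Fin dA × Fin dB → ℝ)
          (a : Fin dA → ℂ) (b : Fin dB → ℂ),
          ∀ q : Fin dA × Fin dB,
            Complex.exp ((φ q : ℂ) * Complex.I) * ψ (π q) = a q.1 * b q.2 := by
  constructor
  · intro π hrank
    set M : Matrix (Fin dA) (Fin dB) ℝ :=
      Matrix.of fun i j => ‖ψ (π (i, j))‖ with hM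
    rw [Matrix.rank] at hrank
    obtain ⟨v, hv0, hv⟩ := (finrank_eq_one_iff' ).mp hrank
    -- columns
    have colmem : ∀ j : Fin dB, (fun i => M i j) ∈ LinearMap.range M.mulVecLin := by
      intro j
      refine ⟨Pi.single j 1, ?_⟩
      rw [Matrix.mulVecLin_apply, Matrix.mulVec_single]
      ext i; simp
    choose c hc using fun j => hv ⟨fun i => M i j, colmem j⟩
    have hMij : ∀ i j, M i j = c j * (v : Fin dA → ℝ) i := by
      intro i j
      have := congrFun (congrArg Subtype.val (hc j)) i
      simpa using this.symm
    refine no_such_factorization ψ p hcard hp hgt π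
      (fun i => ((v : Fin dA → ℝ) i)) (fun j => c j) ?_
    intro q
    have habs : ψ (π q) ≠ 0 ↔ M q.1 q.2 ≠ 0 := by
      simp [hM, Matrix.of_apply, map_ne_zero]
    rw [habs, hMij q.1 q.2, mul_comm]
  · rintro ⟨π, φ, a, b, hab⟩
    refine no_such_factorization ψ p hcard hp hgt π a b ?_
    intro q
    rw [← hab q]
    constructor
    · intro h
      exact mul_ne_zero (Complex.exp_ne_zero _) h
    · intro h hc
      exact h (by rw [hc, mul_zero])
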